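/- Let F(y) = sqrt(h(y,y)) + β(y) be a Randers norm with ‖β‖_h < 1 and let F_s(y) = sqrt(h(y,y)+β(y)²) be its symmetrization. Then the polar transform of F_s is given by F_s*(α) = sqrt(‖α‖_h² − h*(α,β)²/(1+‖β‖_h²)); in particular, in general 2F_s*(α)² ≠ F*(α)² + F*(−α)², i.e., the polar of the symmetrization differs from the symmetrization of the polar. -/

import Mathlib

lemma gCS {E : Type*} [NormedAddCommGroup E] [InnerProductSpace ℝ E] (b x y : E) :
    ((inner ℝ x y : ℝ) + (inner ℝ b x : ℝ) * (inner ℝ b y : ℝ)) ^ 2 ≤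
      (‖x‖ ^ 2 + (inner ℝ b x : ℝ) ^ 2) * (‖y‖ ^ 2 + (inner ℝ b y : ℝ) ^ 2) := by
  have h1 := real_inner_mul_inner_self_le x y
  rw [real_inner_self_eq_norm_sq, real_inner_self_eq_norm_sq] at h1
  nlinarith [sq_nonneg (‖x‖ * (inner ℝ b y : ℝ) - ‖y‖ * (inner ℝ b x : ℝ)),
    sq_nonneg (‖x‖ * (inner ℝ b y : ℝ) + ‖y‖ * (inner ℝ b x : ℝ)),
    sq_nonneg ((inner ℝ x y : ℝ) - ‖x‖*‖y‖), sq_nonneg ((inner ℝ x y : ℝ) + ‖x‖*‖y‖),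
    mul_nonneg (norm_nonneg x) (norm_nonneg y), sq_nonneg ((inner ℝ b x : ℝ)*(inner ℝ b y : ℝ))]

set_option maxHeartbeats 1000000 in
/-- For a Randers norm `F y = ‖y‖ + ⟪b,y⟫` with `‖b‖ < 1` and its
symmetrization `F_s y = √(‖y‖² + ⟪b,y⟫²)`, the polar transform of `F_s` is
`F_s* α = √(‖a‖² − ⟪a,b⟫²/(1+‖b‖²))` (covectors represented by vectors via Riesz);
in particular the polar of the symmetrization differs in general from the
symmetrization of the polar: there is an example (in dimension 2) with
`2 F_s*(a)² ≠ F*(a)² + F*(−a)²`, `F*` being the polar of `F` in its closed form. -/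
theorem stmt_18 (n : ℕ) (hn : 1 ≤ n) (b : EuclideanSpace ℝ (Fin n)) (hb : ‖b‖ < 1)
    (Fs : EuclideanSpace ℝ (Fin n) → ℝ)
    (hFs : ∀ y, Fs y = Real.sqrt (‖y‖ ^ 2 + (inner ℝ b y : ℝ) ^ 2)) :
    (∀ a : EuclideanSpace ℝ (Fin n),
      IsLUB {q : ℝ | ∃ y : EuclideanSpace ℝ (Fin n), y ≠ 0 ∧ q = (inner ℝ a y : ℝ) / Fs y}
        (Real.sqrt (‖a‖ ^ 2 - (inner ℝ a b : ℝ) ^ 2 / (1 + ‖b‖ ^ 2)))) ∧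
    (∃ (b' a' : EuclideanSpace ℝ (Fin 2)), ‖b'‖ < 1 ∧
      2 * (‖a'‖ ^ 2 - (inner ℝ a' b' : ℝ) ^ 2 / (1 + ‖b'‖ ^ 2)) ≠
        ((Real.sqrt ((inner ℝ a' b' : ℝ) ^ 2 + (1 - ‖b'‖ ^ 2) * ‖a'‖ ^ 2)
            - (inner ℝ a' b' : ℝ)) / (1 - ‖b'‖ ^ 2)) ^ 2 +
        ((Real.sqrt ((inner ℝ (-a') b' : ℝ) ^ 2 + (1 - ‖b'‖ ^ 2) * ‖(-a' : EuclideanSpace ℝ (Fin 2))‖ ^ 2)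
            - (inner ℝ (-a') b' : ℝ)) / (1 - ‖b'‖ ^ 2)) ^ 2) := by
  constructor
  · intro a
    set K : ℝ := 1 + ‖b‖ ^ 2 with hK
    have hKpos : (0:ℝ) < K := by positivity
    set c : ℝ := (inner ℝ a b : ℝ) / K with hc
    set z : EuclideanSpace ℝ (Fin n) := a - c • b with hz
    -- basic identities
    have hbz : (inner ℝ b z : ℝ) = c := by
      rw [hz, inner_sub_right, real_inner_smul_right, real_inner_self_eq_norm_sq, hc,
        real_inner_comm]
      field_simp
      ring
    have hznorm : ‖z‖ ^ 2 = ‖a‖ ^ 2 - 2 * c * (inner ℝ a b : ℝ) + c ^ 2 * ‖b‖ ^ 2 := by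
      rw [hz, norm_sub_sq_real, real_inner_smul_right, norm_smul, Real.norm_eq_abs, mul_pow, sq_abs]
      ring
    have hE1 : ‖a‖ ^ 2 - (inner ℝ a b : ℝ) ^ 2 / K = ‖z‖ ^ 2 + c ^ 2 := by
      rw [hznorm, hc]; field_simp; ring
    have hE1nn : 0 ≤ ‖a‖ ^ 2 - (inner ℝ a b : ℝ) ^ 2 / K := by
      rw [hE1]; positivity
    have haz : (inner ℝ a z : ℝ) = ‖z‖ ^ 2 + c ^ 2 := by
      have : a = z + c • b := by rw [hz]; abel
      calc (inner ℝ a z : ℝ) = (inner ℝ (z + c • b) z : ℝ) := by rw [← this]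
        _ = ‖z‖ ^ 2 + c * (inner ℝ b z : ℝ) := by
            rw [inner_add_left, real_inner_smul_left, real_inner_self_eq_norm_sq]
        _ = ‖z‖ ^ 2 + c ^ 2 := by rw [hbz]; ring
    have hay : ∀ y : EuclideanSpace ℝ (Fin n),
        (inner ℝ a y : ℝ) = (inner ℝ z y : ℝ) + (inner ℝ b z : ℝ) * (inner ℝ b y : ℝ) := by
      intro y
      have : a = z + c • b := by rw [hz]; abel
      rw [hbz, this, inner_add_left, real_inner_smul_left]
    have hFsnn : ∀ y, 0 ≤ Fs y := fun y => by rw [hFs]; exact Real.sqrt_nonneg _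
    have hFspos : ∀ y : EuclideanSpace ℝ (Fin n), y ≠ 0 → 0 < Fs y := by
      intro y hy
      rw [hFs]
      apply Real.sqrt_pos.2
      have h0 : 0 < ‖y‖ := norm_pos_iff.2 hy
      nlinarith [sq_nonneg (inner ℝ b y : ℝ)]
    set R : ℝ := Real.sqrt (‖a‖ ^ 2 - (inner ℝ a b : ℝ) ^ 2 / K) with hR
    have hRnn : 0 ≤ R := Real.sqrt_nonneg _
    have hub : ∀ q ∈ {q : ℝ | ∃ y : EuclideanSpace ℝ (Fin n), y ≠ 0 ∧ q = (inner ℝ a y : ℝ) / Fs y}, q ≤ R := by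
      rintro q ⟨y, hy, rfl⟩
      rw [div_le_iff₀ (hFspos y hy)]
      have key : (inner ℝ a y : ℝ) ^ 2 ≤ (‖a‖ ^ 2 - (inner ℝ a b : ℝ) ^ 2 / K) * (‖y‖ ^ 2 + (inner ℝ b y : ℝ) ^ 2) := by
        rw [hay y, hE1, ← hbz]
        exact gCS b z y
      calc (inner ℝ a y : ℝ) ≤ |(inner ℝ a y : ℝ)| := le_abs_self _
        _ = Real.sqrt ((inner ℝ a y : ℝ) ^ 2) := (Real.sqrt_sq_eq_abs _).symm
        _ ≤ Real.sqrt ((‖a‖ ^ 2 - (inner ℝ a b : ℝ) ^ 2 / K) * (‖y‖ ^ 2 + (inner ℝ b y : ℝ) ^ 2)) :=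
            Real.sqrt_le_sqrt key
        _ = R * Fs y := by rw [Real.sqrt_mul hE1nn, hFs]
    refine ⟨hub, ?_⟩
    intro u hu
    by_cases ha : a = 0
    · have h0 : (0:ℝ) ∈ {q : ℝ | ∃ y : EuclideanSpace ℝ (Fin n), y ≠ 0 ∧ q = (inner ℝ a y : ℝ) / Fs y} := by
        refine ⟨EuclideanSpace.single ⟨0, hn⟩ (1:ℝ), ?_, ?_⟩
        · intro h
          have := congrArg (fun v : EuclideanSpace ℝ (Fin n) => v ⟨0, hn⟩) h
          simpa using this
        · rw [ha]; simp
      have hRle : R = 0 := by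
        rw [hR, ha]
        simp
      rw [hRle]
      exact hu h0
    · -- R is attained at z
      have hE1pos : 0 < ‖z‖ ^ 2 + c ^ 2 := by
        rcases (by positivity : (0:ℝ) ≤ ‖z‖ ^ 2 + c ^ 2).lt_or_eq with h | h
        · exact h
        · exfalso
          apply ha
          have hz0 : ‖z‖ = 0 := by nlinarith [sq_nonneg ‖z‖, sq_nonneg c]
          have hc0 : c = 0 := by nlinarith [sq_nonneg ‖z‖, sq_nonneg c]
          have haeq : a = z + c • b := by rw [hz]; abel
          rw [haeq, norm_eq_zero.1 hz0, hc0, zero_smul, add_zero]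
      have hipos : 0 < (inner ℝ a z : ℝ) := by rw [haz]; exact hE1pos
      have hzne : z ≠ 0 := by
        intro h
        rw [h, inner_zero_right] at hipos
        exact lt_irrefl 0 hipos
      have hmem : R ∈ {q : ℝ | ∃ y : EuclideanSpace ℝ (Fin n), y ≠ 0 ∧ q = (inner ℝ a y : ℝ) / Fs y} := by
        refine ⟨z, hzne, ?_⟩
        rw [haz, hFs, hbz, hR, hE1, Real.div_sqrt]
      exact hu hmem
  · refine ⟨EuclideanSpace.single 0 (1/2:ℝ), EuclideanSpace.single 0 (1:ℝ), ?_, ?_⟩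
    · rw [EuclideanSpace.norm_single]; norm_num
    · have hnb : ‖(EuclideanSpace.single 0 (1/2:ℝ) : EuclideanSpace ℝ (Fin 2))‖ = 1/2 := by
        rw [EuclideanSpace.norm_single]; norm_num
      have hna : ‖(EuclideanSpace.single 0 (1:ℝ) : EuclideanSpace ℝ (Fin 2))‖ = 1 := by
        rw [EuclideanSpace.norm_single]; norm_num
      have hi : (inner ℝ (EuclideanSpace.single 0 (1:ℝ) : EuclideanSpace ℝ (Fin 2)) (EuclideanSpace.single 0 (1/2:ℝ)) : ℝ) = 1/2 := by
        rw [EuclideanSpace.inner_single_left]; simp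
      have hi' : (inner ℝ (-(EuclideanSpace.single 0 (1:ℝ)) : EuclideanSpace ℝ (Fin 2)) (EuclideanSpace.single 0 (1/2:ℝ)) : ℝ) = -(1/2) := by
        rw [inner_neg_left, hi]
      rw [hnb, hna, hi, hi', norm_neg, hna]
      have h1 : ((1:ℝ)/2) ^ 2 + (1 - (1/2) ^ 2) * 1 ^ 2 = 1 := by norm_num
      have h2 : (-(1/2):ℝ) ^ 2 + (1 - (1/2) ^ 2) * 1 ^ 2 = 1 := by norm_num
      rw [h1, h2, Real.sqrt_one]
      norm_num
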